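/- arXiv:1201.2363 — 2 statements merged into one kernel-verified Lean document; each statement's English description precedes it below -/
import Mathlib

section
/- Let m and n be positive even integers. The number of group homomorphisms from D_m into D_n is 4 + 4n + n·(∑_{k | gcd(m,n)} φ(k)). -/
open DihedralGroup

namespace NumHomAux

lemma card_torsion (n m : ℕ) [NeZero n] :
    Nat.card {a : ZMod n // (m : ZMod n) * a = 0} = Nat.gcd m n := by
  set g := Nat.gcd m n with hg
  have hgpos : 0 < g := Nat.gcd_pos_of_pos_right m (Nat.pos_of_ne_zero (NeZero.ne n))
  set c := n / g with hc
  have hcg : c * g = n := Nat.div_mul_cancel (Nat.gcd_dvd_right m n)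
  have hcpos : 0 < c := by
    rcases Nat.eq_zero_or_pos c with h | h
    · exact absurd (by rw [← hcg, h, zero_mul]) (NeZero.ne n)
    · exact h
  have key : ∀ a : ZMod n, ((m : ZMod n) * a = 0) ↔ c ∣ a.val := by
    intro a
    have h1 : (m : ZMod n) * a = ((m * a.val : ℕ) : ZMod n) := by
      push_cast [ZMod.natCast_zmod_val]; ring
    rw [h1, ZMod.natCast_eq_zero_iff]
    constructor
    · intro h
      set m' := m / g with hm'
      have hmg : g * m' = m := Nat.mul_div_cancel' (Nat.gcd_dvd_left m n)
      have hco : Nat.Coprime c m' := (Nat.coprime_div_gcd_div_gcd hgpos).symm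
      have h2 : g * c ∣ g * (m' * a.val) := by
        rw [← mul_assoc, hmg, mul_comm g c, hcg]; exact h
      have h3 : c ∣ m' * a.val := (mul_dvd_mul_iff_left hgpos.ne').mp h2
      exact hco.dvd_of_dvd_mul_left h3
    · intro h
      obtain ⟨t, ht⟩ := h
      obtain ⟨m', hmg⟩ := Nat.gcd_dvd_left m n
      calc n = c * g := hcg.symm
        _ ∣ (c * g) * (m' * t) := Dvd.intro _ rfl
        _ = m * a.val := by rw [ht, hmg]; ring
  -- now the bijection with Fin g
  have e1 : {a : ZMod n // (m : ZMod n) * a = 0} ≃ {a : ZMod n // c ∣ a.val} :=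
    Equiv.subtypeEquivRight key
  have e2 : {a : ZMod n // c ∣ a.val} ≃ Fin g := by
    refine ⟨fun a => ⟨a.1.val / c, ?_⟩, fun j => ⟨((j.1 * c : ℕ) : ZMod n), ?_⟩, ?_, ?_⟩
    · have : a.1.val < g * c := by rw [mul_comm g c, hcg]; exact ZMod.val_lt a.1
      exact Nat.div_lt_of_lt_mul (by rwa [mul_comm g c] at this)
    · have hlt : j.1 * c < n := by
        rw [← hcg, mul_comm c g]
        exact Nat.mul_lt_mul_of_lt_of_le j.2 le_rfl hcpos
      rw [ZMod.val_cast_of_lt hlt]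
      exact ⟨j.1, mul_comm _ _⟩
    · rintro ⟨a, ha⟩
      apply Subtype.ext
      simp only
      rw [Nat.div_mul_cancel ha, ZMod.natCast_zmod_val]
    · rintro ⟨j, hj⟩
      apply Fin.ext
      simp only
      have hlt : j * c < n := by
        rw [← hcg, mul_comm c g]
        exact Nat.mul_lt_mul_of_lt_of_le hj le_rfl hcpos
      rw [ZMod.val_cast_of_lt hlt, Nat.mul_div_cancel _ hcpos]
  rw [Nat.card_congr (e1.trans e2), Nat.card_eq_fintype_card, Fintype.card_fin]

section
variable {G : Type*} [Group G] {m : ℕ}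

private lemma pow_mod {x : G} (hx : x ^ m = 1) {a b : ℕ} (h : a ≡ b [MOD m]) :
    x ^ a = x ^ b :=
  pow_eq_pow_iff_modEq.mpr (h.of_dvd (orderOf_dvd_of_pow_eq_one hx))

private def pairToHomFun (x y : G) : DihedralGroup m → G
  | .r i => x ^ i.val
  | .sr i => y * x ^ i.val

private def pairToHom [NeZero m] (x y : G) (hx : x ^ m = 1)
    (hxy : y * x * y⁻¹ = x⁻¹) (hy : y ^ 2 = 1) : DihedralGroup m →* G := by
  refine MonoidHom.mk' (pairToHomFun x y) ?_
  have hyinv : y⁻¹ = y := by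
    rw [← mul_one y⁻¹, ← hy]; group
  have key : ∀ i j : ZMod m, x ^ (i + j).val = x ^ i.val * x ^ j.val := fun i j => by
    rw [← pow_add]
    exact pow_mod hx (by rw [ZMod.val_add]; exact Nat.mod_modEq _ m)
  have K1 : ∀ k : ℕ, y * x ^ k = (x ^ k)⁻¹ * y := fun k => by
    have h1 : (y * x * y⁻¹) ^ k = y * x ^ k * y⁻¹ := conj_pow
    rw [hxy, inv_pow] at h1
    rw [h1]; group
  have K2 : ∀ k : ℕ, x ^ k * y = y * (x ^ k)⁻¹ := fun k => by
    apply mul_left_cancel (a := y)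
    rw [← mul_assoc, K1 k, mul_assoc, ← sq, hy, mul_one, ← mul_assoc, ← sq, hy, one_mul]
  have Xneg : ∀ i : ZMod m, x ^ (-i).val = (x ^ i.val)⁻¹ := fun i => by
    have h1 : x ^ (-i + i).val = x ^ (-i).val * x ^ i.val := key _ _
    rw [neg_add_cancel] at h1
    have h0 : x ^ (0 : ZMod m).val = 1 := by rw [ZMod.val_zero, pow_zero]
    rw [h0] at h1
    exact eq_inv_of_mul_eq_one_left h1.symm
  rintro (i | i) (j | j) <;>
    simp only [r_mul_r, r_mul_sr, sr_mul_r, sr_mul_sr, pairToHomFun]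
  · exact key i j
  · have h : x ^ (j - i).val = x ^ (-i).val * x ^ j.val := by
      rw [sub_eq_neg_add]; exact key _ _
    rw [h, Xneg, ← mul_assoc, ← mul_assoc, K2]
  · rw [key, mul_assoc]
  · have h : x ^ (j - i).val = x ^ (-i).val * x ^ j.val := by
      rw [sub_eq_neg_add]; exact key _ _
    rw [h, Xneg, K1 i.val, mul_assoc ((x ^ i.val)⁻¹) y, ← mul_assoc y y, ← sq, hy, one_mul]

private lemma r_inv {n : ℕ} (i : ZMod n) : (r i : DihedralGroup n)⁻¹ = r (-i) :=
  inv_eq_of_mul_eq_one_right (by rw [r_mul_r, add_neg_cancel]; rfl)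

private lemma sr_inv {n : ℕ} (i : ZMod n) : (sr i : DihedralGroup n)⁻¹ = sr i :=
  inv_eq_of_mul_eq_one_right (sr_mul_self i)

private lemma sr_sq {n : ℕ} (i : ZMod n) : (sr i : DihedralGroup n) ^ 2 = 1 := by
  rw [sq, sr_mul_self]

def homEquivPairs (m : ℕ) [NeZero m] (hm1 : 1 < m) (G : Type*) [Group G] :
    (DihedralGroup m →* G) ≃
      {p : G × G // p.1 ^ m = 1 ∧ p.2 * p.1 * p.2⁻¹ = p.1⁻¹ ∧ p.2 ^ 2 = 1} where
  toFun φ := ⟨(φ (r 1), φ (sr 0)), by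
    refine ⟨?_, ?_, ?_⟩
    · rw [← map_pow, r_one_pow]
      have h0 : ((m : ZMod m)) = 0 := ZMod.natCast_self m
      rw [h0, ← one_def, map_one]
    · rw [← map_inv, ← map_mul, ← map_mul, ← map_inv, sr_inv, sr_mul_r, zero_add,
        sr_mul_sr, r_inv, zero_sub]
    · rw [← map_pow, sr_sq, map_one]⟩
  invFun p := pairToHom p.1.1 p.1.2 p.2.1 p.2.2.1 p.2.2.2
  left_inv φ := by
    ext g
    rcases g with i | i
    · show φ (r 1) ^ i.val = φ (r i)
      rw [← map_pow, r_one_pow, ZMod.natCast_zmod_val]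
    · show φ (sr 0) * φ (r 1) ^ i.val = φ (sr i)
      rw [← map_pow, r_one_pow, ZMod.natCast_zmod_val, ← map_mul, sr_mul_r, zero_add]
  right_inv p := by
    haveI : Fact (1 < m) := ⟨hm1⟩
    apply Subtype.ext
    apply Prod.ext
    · show p.1.1 ^ (1 : ZMod m).val = p.1.1
      rw [ZMod.val_one, pow_one]
    · show p.1.2 * p.1.1 ^ (0 : ZMod m).val = p.1.2
      rw [ZMod.val_zero, pow_zero, mul_one]
end

lemma r_pow {n : ℕ} (a : ZMod n) (k : ℕ) : (r a : DihedralGroup n) ^ k = r ((k : ZMod n) * a) := by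
  induction k with
  | zero => rw [pow_zero, one_def]; congr 1; push_cast; ring
  | succ k ih => rw [pow_succ, ih, r_mul_r]; congr 1; push_cast; ring

lemma sr_pow_even {n m : ℕ} (hme : Even m) (a : ZMod n) : (sr a : DihedralGroup n) ^ m = 1 := by
  obtain ⟨k, rfl⟩ := hme
  rw [← two_mul, pow_mul, sr_sq, one_pow]

lemma r_pow_eq_one_iff {n m : ℕ} (a : ZMod n) :
    (r a : DihedralGroup n) ^ m = 1 ↔ (m : ZMod n) * a = 0 := by
  rw [r_pow, one_def, r.injEq]

lemma r_sq_eq_one_iff {n : ℕ} (b : ZMod n) :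
    (r b : DihedralGroup n) ^ 2 = 1 ↔ b + b = 0 := by
  rw [r_pow_eq_one_iff]
  push_cast
  rw [two_mul]

lemma even_cond {n m : ℕ} (hme : Even m) {a : ZMod n} (ha : a + a = 0) :
    (m : ZMod n) * a = 0 := by
  obtain ⟨k, rfl⟩ := hme
  push_cast
  calc ((k : ZMod n) + k) * a = k * (a + a) := by ring
    _ = 0 := by rw [ha, mul_zero]

/-- classification of pairs satisfying the dihedral relations -/
def pairsEquiv (n m : ℕ) (hme : Even m) :
    {p : DihedralGroup n × DihedralGroup n //
        p.1 ^ m = 1 ∧ p.2 * p.1 * p.2⁻¹ = p.1⁻¹ ∧ p.2 ^ 2 = 1} ≃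
      ({a : ZMod n // a + a = 0} × {b : ZMod n // b + b = 0}) ⊕
      (({a : ZMod n // (m : ZMod n) * a = 0} × ZMod n) ⊕
       ((ZMod n × {b : ZMod n // b + b = 0}) ⊕
        (ZMod n × {c : ZMod n // c + c = 0}))) where
  toFun := fun
    | ⟨(.r a, .r b), h⟩ => .inl (⟨a, by
        have h2 := h.2.1
        rw [r_inv, r_inv, r_mul_r, r_mul_r, r.injEq] at h2
        have : b + a + -b = a := by ring
        rw [this] at h2
        exact eq_neg_iff_add_eq_zero.mp h2⟩,
      ⟨b, (r_sq_eq_one_iff b).mp h.2.2⟩)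
    | ⟨(.r a, .sr b), h⟩ => .inr (.inl (⟨a, (r_pow_eq_one_iff a).mp h.1⟩, b))
    | ⟨(.sr a, .r b), h⟩ => .inr (.inr (.inl (a, ⟨b, (r_sq_eq_one_iff b).mp h.2.2⟩)))
    | ⟨(.sr a, .sr b), h⟩ => .inr (.inr (.inr (a, ⟨b - a, by
        have h2 := h.2.1
        rw [sr_inv, sr_inv, sr_mul_sr, r_mul_sr, sr.injEq] at h2
        have h3 : b - (a - b) = a + ((b - a) + (b - a)) := by ring
        rw [h3, add_eq_left] at h2
        exact h2⟩)))
  invFun := fun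
    | .inl (⟨a, ha⟩, ⟨b, hb⟩) => ⟨(.r a, .r b), by
        refine ⟨(r_pow_eq_one_iff a).mpr (even_cond hme ha), ?_, (r_sq_eq_one_iff b).mpr hb⟩
        rw [r_inv, r_inv, r_mul_r, r_mul_r, r.injEq]
        have : b + a + -b = a := by ring
        rw [this]
        exact eq_neg_iff_add_eq_zero.mpr ha⟩
    | .inr (.inl (⟨a, ha⟩, b)) => ⟨(.r a, .sr b), by
        refine ⟨(r_pow_eq_one_iff a).mpr ha, ?_, sr_sq b⟩
        rw [sr_inv, r_inv, sr_mul_r, sr_mul_sr, r.injEq]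
        ring⟩
    | .inr (.inr (.inl (a, ⟨b, hb⟩))) => ⟨(.sr a, .r b), by
        refine ⟨sr_pow_even hme a, ?_, (r_sq_eq_one_iff b).mpr hb⟩
        rw [r_inv, sr_inv, r_mul_sr, sr_mul_r, sr.injEq]
        have h3 : a - b + -b = a - (b + b) := by ring
        rw [h3, hb, sub_zero]⟩
    | .inr (.inr (.inr (a, ⟨c, hc⟩))) => ⟨(.sr a, .sr (a + c)), by
        refine ⟨sr_pow_even hme a, ?_, sr_sq _⟩
        rw [sr_inv, sr_inv, sr_mul_sr, r_mul_sr, sr.injEq]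
        have h3 : a + c - (a - (a + c)) = a + (c + c) := by ring
        rw [h3, hc, add_zero]⟩
  left_inv := fun
    | ⟨(.r a, .r b), h⟩ => rfl
    | ⟨(.r a, .sr b), h⟩ => rfl
    | ⟨(.sr a, .r b), h⟩ => rfl
    | ⟨(.sr a, .sr b), h⟩ => Subtype.ext (by simp)
  right_inv := fun
    | .inl (⟨a, ha⟩, ⟨b, hb⟩) => rfl
    | .inr (.inl (⟨a, ha⟩, b)) => rfl
    | .inr (.inr (.inl (a, ⟨b, hb⟩))) => rfl
    | .inr (.inr (.inr (a, ⟨c, hc⟩))) => by simp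


end NumHomAux

open NumHomAux

theorem numHom_even_even (m n : ℕ) (hm : 0 < m) (hn : 0 < n) (hme : Even m) (hne : Even n) :
    Nat.card (DihedralGroup m →* DihedralGroup n) =
      4 + 4 * n + n * ∑ k ∈ (Nat.gcd m n).divisors, Nat.totient k := by
  haveI : NeZero m := ⟨hm.ne'⟩
  haveI : NeZero n := ⟨hn.ne'⟩
  have hm1 : 1 < m := lt_of_lt_of_le one_lt_two (Nat.le_of_dvd hm hme.two_dvd)
  have h2 : Nat.card {b : ZMod n // b + b = 0} = 2 := by
    have e : {b : ZMod n // b + b = 0} ≃ {b : ZMod n // ((2:ℕ) : ZMod n) * b = 0} :=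
      Equiv.subtypeEquivRight (fun b => by push_cast; rw [two_mul])
    rw [Nat.card_congr e, card_torsion]
    exact Nat.gcd_eq_left hne.two_dvd
  rw [Nat.card_congr ((homEquivPairs m hm1 (DihedralGroup n)).trans (pairsEquiv n m hme)),
    Nat.card_sum, Nat.card_sum, Nat.card_sum, Nat.card_prod, Nat.card_prod, Nat.card_prod, Nat.card_zmod, h2, card_torsion, Nat.sum_totient]
  ring
end

section
/- Let m and n be positive odd integers with gcd(m,n) = 1. The number of group homomorphisms from D_m into D_n is n + 1. -/
open DihedralGroup

private lemma r_pow_eq {n : ℕ} (a : ZMod n) (k : ℕ) :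
    (r a : DihedralGroup n) ^ k = r ((k : ZMod n) * a) := by
  induction k with
  | zero => simp [DihedralGroup.one_def, -DihedralGroup.r_zero]
  | succ k ih =>
    rw [pow_succ, ih, r_mul_r]
    congr 1
    push_cast
    ring

private def mkHom {m n : ℕ} (x : DihedralGroup n) (hx : x * x = 1) :
    DihedralGroup m →* DihedralGroup n where
  toFun g := match g with
    | DihedralGroup.r _ => 1
    | DihedralGroup.sr _ => x
  map_one' := rfl
  map_mul' := by
    rintro (a | a) (b | b) <;>
      simp [DihedralGroup.r_mul_r, DihedralGroup.r_mul_sr,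
        DihedralGroup.sr_mul_r, DihedralGroup.sr_mul_sr, hx]

theorem numHom_odd_odd_coprime (m n : ℕ) (hm : 0 < m) (hn : 0 < n) (hmo : Odd m) (hno : Odd n)
    (hcop : Nat.gcd m n = 1) :
    Nat.card (DihedralGroup m →* DihedralGroup n) = n + 1 := by
  haveI : NeZero m := ⟨hm.ne'⟩
  haveI : NeZero n := ⟨hn.ne'⟩
  have hmu : IsUnit (m : ZMod n) := (ZMod.isUnit_iff_coprime m n).mpr hcop
  have h2u : IsUnit (2 : ZMod n) := by
    have : IsUnit ((2 : ℕ) : ZMod n) :=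
      (ZMod.isUnit_iff_coprime 2 n).mpr (Nat.coprime_two_left.mpr hno)
    simpa using this
  -- every homomorphism kills r 1
  have key : ∀ f : DihedralGroup m →* DihedralGroup n, f (r 1) = 1 := by
    intro f
    have hx : f (r 1) ^ m = 1 := by
      rw [← map_pow, r_pow_eq, mul_one, ZMod.natCast_self, ← DihedralGroup.one_def, map_one]
    rcases hfr : f (r 1) with a | a
    · rw [hfr, r_pow_eq] at hx
      have ha : (m : ZMod n) * a = 0 := by
        have : r ((m : ZMod n) * a) = r 0 := by rw [hx, DihedralGroup.one_def]
        simpa [-DihedralGroup.r_zero] using this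
      have : a = 0 := (IsUnit.mul_right_eq_zero hmu).mp ha
      simp [this, DihedralGroup.one_def, -DihedralGroup.r_zero]
    · exfalso
      obtain ⟨k, hk⟩ := hmo
      rw [hfr] at hx
      have hsq : (sr a : DihedralGroup n) ^ 2 = 1 := by
        rw [sq, DihedralGroup.sr_mul_sr]
        simp [DihedralGroup.one_def, -DihedralGroup.r_zero]
      have : (sr a : DihedralGroup n) ^ m = sr a := by
        rw [hk, pow_add, pow_mul, hsq, one_pow, one_mul, pow_one]
      rw [this] at hx
      simp [DihedralGroup.one_def, -DihedralGroup.r_zero] at hx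
  have keyr : ∀ (f : DihedralGroup m →* DihedralGroup n) (i : ZMod m), f (r i) = 1 := by
    intro f i
    have : (r i : DihedralGroup m) = r 1 ^ i.val := by
      rw [r_pow_eq, mul_one, ZMod.natCast_val, ZMod.cast_id]
    rw [this, map_pow, key f, one_pow]
  have keysr : ∀ (f : DihedralGroup m →* DihedralGroup n) (i : ZMod m),
      f (sr i) = f (sr 0) := by
    intro f i
    have : (sr i : DihedralGroup m) = sr 0 * r i := by
      rw [DihedralGroup.sr_mul_r, zero_add]
    rw [this, map_mul, keyr f i, mul_one]
  have keysq : ∀ f : DihedralGroup m →* DihedralGroup n, f (sr 0) * f (sr 0) = 1 := by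
    intro f
    rw [← map_mul, DihedralGroup.sr_mul_sr]
    simpa [DihedralGroup.one_def, -DihedralGroup.r_zero] using keyr f 0
  -- the equivalence
  have e : (DihedralGroup m →* DihedralGroup n) ≃ Option (ZMod n) :=
    { toFun := fun f => match f (sr 0) with
        | DihedralGroup.r _ => none
        | DihedralGroup.sr a => some a
      invFun := fun o => match o with
        | none => mkHom 1 (one_mul 1)
        | some a => mkHom (sr a) (by
            rw [DihedralGroup.sr_mul_sr]
            simp [DihedralGroup.one_def, -DihedralGroup.r_zero])
      left_inv := by
        intro f
        rcases hf0 : f (sr 0) with b | b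
        · have hb : b = 0 := by
            have := keysq f
            rw [hf0, DihedralGroup.r_mul_r, DihedralGroup.one_def] at this
            have hbb : b + b = 0 := by simpa [-DihedralGroup.r_zero] using this
            exact (IsUnit.mul_right_eq_zero h2u).mp (by rwa [two_mul])
          simp only [hf0]
          ext g
          rcases g with i | i
          · rw [keyr f i]; rfl
          · rw [keysr f i, hf0, hb]
            show (1 : DihedralGroup n) = r 0
            rw [DihedralGroup.one_def]
        · simp only [hf0]
          ext g
          rcases g with i | i
          · rw [keyr f i]; rfl
          · rw [keysr f i, hf0]; rfl
      right_inv := by rintro (_ | a) <;> rfl }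
  rw [Nat.card_congr e]
  simp [Nat.card_eq_fintype_card]
end
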